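/- Let f be real-analytic near a simple root α with f'(x) ≠ 0 near α, and let ψ(x) = z - ((f(x)+f(z))/(f(x)-f(z)))·(f(z)/f'(x)) with z = x - f(x)/f'(x). Then there exist δ > 0 and C > 0 such that |ψ(x) - α| ≤ C|x - α|⁴ for all x with |x - α| < δ; in particular, the iteration x_{n+1} = ψ(x_n) converges to α with order at least 4 for x₀ sufficiently close to α. -/

import Mathlib

open Filter Topology

set_option maxHeartbeats 1000000 in
private lemma newton_key_algebra (α x G G' K F' Q D fx zx fz psix V : ℝ)
    (he : x - α ≠ 0) (hF : F' ≠ 0) (hD : D ≠ 0) (hsub : fx - fz ≠ 0)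
    (h1 : fx = (x - α) * G)
    (h2 : zx = x - fx / F')
    (h3 : fz = (zx - α) * Q)
    (h4 : F' = G + (x - α) * G')
    (h5 : Q = G - (x - α) * K)
    (h6 : (x - α) * V = G * (G' + K) * F' - G' * Q * (F' + Q))
    (h7 : D = G * F' - (x - α) * (G' * Q))
    (h8 : psix = zx - ((fx + fz) / (fx - fz)) * (fz / F')) :
    psix - α = (x - α) ^ 4 * (G' * V / (F' ^ 2 * D)) := by
  have hV : V = (G * (G' + K) * F' - G' * Q * (F' + Q)) / (x - α) := by
    rw [eq_div_iff he]; linarith [h6]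
  subst h1 h2 h3 h5 h7 hV h4 h8
  have hF4 : G + (x - α) * G' ≠ 0 := hF
  have hsubeq : (x - α) * G - (x - (x - α) * G / (G + (x - α) * G') - α) * (G - (x - α) * K)
      = ((x - α) * (G * (G + (x - α) * G') - (x - α) * (G' * (G - (x - α) * K)))) /
        (G + (x - α) * G') := by
    field_simp
    ring
  rw [hsubeq, div_div_eq_mul_div]
  have hD' : G * (G + (x - α) * G') - (x - α) * G' * (G - (x - α) * K) ≠ 0 := by
    rw [mul_assoc (x - α)]; exact hD
  field_simp
  ring

private lemma dslope_factor (F : ℝ → ℝ) (a : ℝ) (h : F a = 0) (x : ℝ) :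
    F x = (x - a) * dslope F a x := by
  rcases eq_or_ne x a with rfl | hx
  · simp [h]
  · rw [dslope_of_ne _ hx, slope_def_field, h, sub_zero, mul_comm, div_mul_cancel₀]
    exact sub_ne_zero.mpr hx

private lemma analyticAt_dslope' {F : ℝ → ℝ} {a : ℝ} (h : AnalyticAt ℝ F a) :
    AnalyticAt ℝ (dslope F a) a := by
  obtain ⟨p, hp⟩ := h
  exact ⟨p.fslope, hp.has_fpower_series_dslope_fslope⟩

private lemma analyticAt_deriv' {F : ℝ → ℝ} {a : ℝ} (h : AnalyticAt ℝ F a) :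
    AnalyticAt ℝ (deriv F) a := by
  have h2 := h.eventually_analyticAt
  rw [Filter.eventually_iff, mem_nhds_iff] at h2
  obtain ⟨s, hsub, hopen, has⟩ := h2
  exact AnalyticOnNhd.deriv (fun y hy => hsub hy) a has

theorem composed_newton_order_four (f : ℝ → ℝ) (α : ℝ)
    (hf : AnalyticAt ℝ f α) (hroot : f α = 0) (hf' : deriv f α ≠ 0)
    (hreg : ∀ᶠ x in nhds α, deriv f x ≠ 0)
    (z ψ : ℝ → ℝ)
    (hz : ∀ x, z x = x - f x / deriv f x)
    (hψ : ∀ x, ψ x = z x - ((f x + f (z x)) / (f x - f (z x))) * (f (z x) / deriv f x))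
    (hne : ∀ᶠ x in nhdsWithin α {α}ᶜ, f x ≠ f (z x)) :
    (∃ δ > 0, ∃ C > 0, ∀ x : ℝ, |x - α| < δ → |ψ x - α| ≤ C * |x - α| ^ 4) ∧
    (∃ δ' > 0, ∀ x₀ : ℝ, |x₀ - α| < δ' →
      Filter.Tendsto (fun n => ψ^[n] x₀) Filter.atTop (nhds α)) := by
  have hf'an : AnalyticAt ℝ (deriv f) α := analyticAt_deriv' hf
  set g : ℝ → ℝ := dslope f α with hgdef
  have hg : AnalyticAt ℝ g α := analyticAt_dslope' hf
  have hfg : ∀ x, f x = (x - α) * g x := dslope_factor f α hroot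
  have hgα : g α = deriv f α := dslope_same f α
  have hz_an : AnalyticAt ℝ z α := by
    have h1 : AnalyticAt ℝ (fun x => x - f x / deriv f x) α :=
      analyticAt_id.sub (hf.div hf'an hf')
    have : z = fun x => x - f x / deriv f x := funext hz
    rw [this]; exact h1
  have hzα : z α = α := by rw [hz, hroot]; simp
  have hg' : AnalyticAt ℝ (deriv g) α := analyticAt_deriv' hg
  have hgz : AnalyticAt ℝ g (z α) := by rw [hzα]; exact hg
  have hq : AnalyticAt ℝ (fun x => g (z x)) α := hgz.comp hz_an
  -- E1 : deriv f = g + (x-α) g' eventually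
  have E1 : ∀ᶠ x in nhds α, deriv f x = g x + (x - α) * deriv g x := by
    filter_upwards [hg.eventually_analyticAt] with x hx
    have hfeq : f = fun y => (y - α) * g y := funext hfg
    have hd : HasDerivAt (fun y => (y - α) * g y) (1 * g x + (x - α) * deriv g x) x :=
      ((hasDerivAt_id x).sub_const α).mul hx.differentiableAt.hasDerivAt
    rw [hfeq, hd.deriv]; ring
  -- k
  set k : ℝ → ℝ := dslope (fun x => g x - g (z x)) α with hkdef
  have hk_an : AnalyticAt ℝ k α := analyticAt_dslope' (hg.sub hq)
  have hk_eq : ∀ x, g x - g (z x) = (x - α) * k x :=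
    dslope_factor _ α (by rw [hzα, sub_self])
  have hzderiv : deriv z α = 0 := by
    have hzfun : z = fun x => x - f x / deriv f x := funext hz
    have hd : HasDerivAt (fun x => x - f x / deriv f x)
        (1 - (deriv f α * deriv f α - f α * deriv (deriv f) α) / deriv f α ^ 2) α :=
      (hasDerivAt_id α).sub
        ((hf.differentiableAt.hasDerivAt).div (hf'an.differentiableAt.hasDerivAt) hf')
    rw [hzfun, hd.deriv, hroot]
    field_simp
    ring
  have hkα : k α = deriv g α := by
    have h1 : k α = deriv (fun x => g x - g (z x)) α := dslope_same _ α
    have h2 : deriv (fun x => g x - g (z x)) α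
        = deriv g α - deriv (fun x => g (z x)) α := by
      rw [deriv_fun_sub hg.differentiableAt]
      have : DifferentiableAt ℝ g (z α) := hgz.differentiableAt
      exact this.comp α hz_an.differentiableAt
    have h3 : deriv (fun x => g (z x)) α = deriv g (z α) * deriv z α := by
      rw [← Function.comp_def]
      exact deriv_comp α hgz.differentiableAt hz_an.differentiableAt
    rw [h1, h2, h3, hzderiv, mul_zero, sub_zero]
  -- D, U, V, W
  set D : ℝ → ℝ := fun x => g x * deriv f x - (x - α) * (deriv g x * g (z x)) with hDdef
  have hD_an : AnalyticAt ℝ D α :=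
    (hg.mul hf'an).sub ((analyticAt_id.sub analyticAt_const).mul (hg'.mul hq))
  have hDα : D α = deriv f α * deriv f α := by
    simp only [hDdef, hgα, sub_self, zero_mul, sub_zero]
  have hD_ne : ∀ᶠ x in nhds α, D x ≠ 0 :=
    hD_an.continuousAt.eventually_ne (by rw [hDα]; exact mul_ne_zero hf' hf')
  set U : ℝ → ℝ := fun x =>
    g x * (deriv g x + k x) * deriv f x - deriv g x * g (z x) * (deriv f x + g (z x))
    with hUdef
  have hU_an : AnalyticAt ℝ U α :=
    ((hg.mul (hg'.add hk_an)).mul hf'an).sub ((hg'.mul hq).mul (hf'an.add hq))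
  have hUα : U α = 0 := by
    simp only [hUdef, hgα, hkα, hzα]
    ring
  set V : ℝ → ℝ := dslope U α with hVdef
  have hV_an : AnalyticAt ℝ V α := analyticAt_dslope' hU_an
  have hV_eq : ∀ x, U x = (x - α) * V x := dslope_factor U α hUα
  set W : ℝ → ℝ := fun x => deriv g x * V x / (deriv f x ^ 2 * D x) with hWdef
  have hW_cont : ContinuousAt W α := by
    apply ContinuousAt.div
    · exact hg'.continuousAt.mul hV_an.continuousAt
    · exact (hf'an.continuousAt.pow 2).mul hD_an.continuousAt
    · rw [hDα]
      positivity
  -- key identity on punctured neighborhood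
  have key : ∀ᶠ x in nhdsWithin α {α}ᶜ, ψ x - α = (x - α) ^ 4 * W x := by
    filter_upwards [hne, self_mem_nhdsWithin,
      (E1.and (hreg.and hD_ne)).filter_mono nhdsWithin_le_nhds] with x hnex hxα hx
    obtain ⟨he1, hregx, hDx⟩ := hx
    have hxne : x ≠ α := hxα
    exact newton_key_algebra α x (g x) (deriv g x) (k x) (deriv f x) (g (z x)) (D x)
      (f x) (z x) (f (z x)) (ψ x) (V x)
      (sub_ne_zero.mpr hxne) hregx hDx (sub_ne_zero.mpr hnex)
      (hfg x) (hz x) (hfg (z x)) he1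
      (by linarith [hk_eq x])
      (by have h := (hV_eq x).symm; simp only [hUdef] at h; exact h)
      (by simp only [hDdef]) (hψ x)
  have hψα : ψ α = α := by
    rw [hψ α, hzα, hroot]
    norm_num
  -- C bound
  set C : ℝ := |W α| + 1 with hCdef
  have hC : 0 < C := by positivity
  have hWb : ∀ᶠ x in nhds α, |W x| < C := by
    have h1 : Filter.Tendsto (fun x => |W x|) (nhds α) (nhds (|W α|)) :=
      (continuous_abs.continuousAt).comp hW_cont
    exact h1.eventually_lt_const (lt_add_one _)
  have main : ∀ᶠ x in nhds α, |ψ x - α| ≤ C * |x - α| ^ 4 := by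
    rw [eventually_nhdsWithin_iff] at key
    filter_upwards [key, hWb] with x hk1 hk2
    rcases eq_or_ne x α with rfl | hxne
    · simp [hψα]
    · rw [hk1 hxne, abs_mul, abs_pow]
      rw [mul_comm]
      apply mul_le_mul_of_nonneg_right hk2.le (by positivity)
  -- contraction
  have hcontr : ∀ᶠ x in nhds α, |ψ x - α| ≤ (1 / 2) * |x - α| := by
    have ht : Filter.Tendsto (fun x => C * |x - α| ^ 3) (nhds α) (nhds 0) := by
      have hc : Continuous fun x : ℝ => C * |x - α| ^ 3 := by
        apply continuous_const.mul
        exact (continuous_abs.comp (continuous_id.sub continuous_const)).pow 3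
      have := hc.tendsto α
      simpa using this
    filter_upwards [main, ht.eventually_lt_const (by norm_num : (0:ℝ) < 1/2)] with x h1 h2
    have h3 : C * |x - α| ^ 3 * |x - α| ≤ 1 / 2 * |x - α| :=
      mul_le_mul_of_nonneg_right h2.le (abs_nonneg _)
    nlinarith [abs_nonneg (x - α)]
  constructor
  · rw [Metric.eventually_nhds_iff] at main
    obtain ⟨δ, hδ, hball⟩ := main
    exact ⟨δ, hδ, C, hC, fun x hx => hball (by rwa [Real.dist_eq])⟩
  · rw [Metric.eventually_nhds_iff] at hcontr
    obtain ⟨δ', hδ', hball⟩ := hcontr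
    refine ⟨δ', hδ', fun x₀ hx₀ => ?_⟩
    have iter : ∀ n : ℕ, |ψ^[n] x₀ - α| ≤ (1/2 : ℝ) ^ n * |x₀ - α| ∧ |ψ^[n] x₀ - α| < δ' := by
      intro n
      induction n with
      | zero => simpa using hx₀
      | succ n ih =>
        obtain ⟨ih1, ih2⟩ := ih
        have hstep : |ψ (ψ^[n] x₀) - α| ≤ 1 / 2 * |ψ^[n] x₀ - α| :=
          hball (by rwa [Real.dist_eq])
        rw [Function.iterate_succ_apply']
        constructor
        · calc |ψ (ψ^[n] x₀) - α| ≤ 1 / 2 * |ψ^[n] x₀ - α| := hstep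
            _ ≤ 1 / 2 * ((1/2) ^ n * |x₀ - α|) := by
                apply mul_le_mul_of_nonneg_left ih1 (by norm_num)
            _ = (1/2 : ℝ) ^ (n + 1) * |x₀ - α| := by ring
        · calc |ψ (ψ^[n] x₀) - α| ≤ 1 / 2 * |ψ^[n] x₀ - α| := hstep
            _ < δ' := by nlinarith [abs_nonneg (ψ^[n] x₀ - α)]
    rw [tendsto_iff_dist_tendsto_zero]
    have hbnd : ∀ n : ℕ, dist (ψ^[n] x₀) α ≤ (1/2 : ℝ) ^ n * |x₀ - α| := by
      intro n
      rw [Real.dist_eq]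
      exact (iter n).1
    have h0 : Filter.Tendsto (fun n : ℕ => (1/2 : ℝ) ^ n * |x₀ - α|)
        Filter.atTop (nhds 0) := by
      have := (tendsto_pow_atTop_nhds_zero_of_lt_one (by norm_num : (0:ℝ) ≤ 1/2)
        (by norm_num : (1/2 : ℝ) < 1)).mul_const |x₀ - α|
      simpa using this
    exact squeeze_zero (fun n => dist_nonneg) hbnd h0
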